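/- arXiv:1307.1764 — 6 statements merged into one kernel-verified Lean document; each statement's English description precedes it below -/
import Mathlib

section
/- If {A_j} is a finite family of 2×2 complex matrices satisfying the completeness relation ∑_j A_j† A_j = I (Kraus operators of a measurement), then ∑_j |det(A_j)| ≤ 1. -/
private lemma key (A : Matrix (Fin 2) (Fin 2) ℂ) :
    ‖A.det‖ ≤ (Matrix.trace (A.conjTranspose * A)).re / 2 := by
  have htr : (Matrix.trace (A.conjTranspose * A)).re
      = ‖A 0 0‖ ^ 2 + ‖A 0 1‖ ^ 2
        + ‖A 1 0‖ ^ 2 + ‖A 1 1‖ ^ 2 := by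
    simp [Matrix.trace, Matrix.mul_apply, Matrix.conjTranspose_apply,
      Fin.sum_univ_two, Complex.mul_re, Complex.sq_norm, Complex.normSq_apply]
    ring
  rw [Matrix.det_fin_two, htr]
  have h1 : ‖A 0 0 * A 1 1 - A 0 1 * A 1 0‖
      ≤ ‖A 0 0‖ * ‖A 1 1‖
        + ‖A 0 1‖ * ‖A 1 0‖ := by
    calc _ ≤ ‖A 0 0 * A 1 1‖ + ‖A 0 1 * A 1 0‖ :=
          norm_sub_le _ _
      _ = _ := by rw [norm_mul, norm_mul]
  nlinarith [norm_nonneg (A 0 0), norm_nonneg (A 0 1),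
    norm_nonneg (A 1 0), norm_nonneg (A 1 1),
    sq_nonneg (‖A 0 0‖ - ‖A 1 1‖),
    sq_nonneg (‖A 0 1‖ - ‖A 1 0‖)]

/-- For Kraus operators {A_j} on a qubit with ∑ A_jᴴ A_j = 1, ∑ |det A_j| ≤ 1. -/
theorem sum_abs_det_le_one {ι : Type*} [Fintype ι]
    (A : ι → Matrix (Fin 2) (Fin 2) ℂ)
    (hA : ∑ j, (A j).conjTranspose * A j = 1) :
    ∑ j, ‖(A j).det‖ ≤ 1 := by
  have h := fun j => key (A j)
  calc ∑ j, ‖(A j).det‖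
      ≤ ∑ j, (Matrix.trace ((A j).conjTranspose * A j)).re / 2 :=
        Finset.sum_le_sum fun j _ => h j
    _ = 1 := by
        rw [← Finset.sum_div, ← Complex.re_sum, ← Matrix.trace_sum, hA]
        simp [Matrix.trace_one]
end

section
/- The function f(a,t) = √(a² − t²) defined on the convex set {(a,t) ∈ ℝ² : a ≥ t ≥ 0} is concave. -/
lemma sqrt_key (a b x1 x2 y1 y2 : ℝ) (hx2 : 0 ≤ x2) (hx : x2 ≤ x1)
    (hy2 : 0 ≤ y2) (hy : y2 ≤ y1) (ha : 0 ≤ a) (hb : 0 ≤ b) :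
    a * Real.sqrt (x1 ^ 2 - x2 ^ 2) + b * Real.sqrt (y1 ^ 2 - y2 ^ 2) ≤
      Real.sqrt ((a * x1 + b * y1) ^ 2 - (a * x2 + b * y2) ^ 2) := by
  have hX : (0:ℝ) ≤ x1 ^ 2 - x2 ^ 2 := by nlinarith
  have hY : (0:ℝ) ≤ y1 ^ 2 - y2 ^ 2 := by nlinarith
  have h1 : Real.sqrt ((x1 ^ 2 - x2 ^ 2) * (y1 ^ 2 - y2 ^ 2)) ≤ x1 * y1 - x2 * y2 := by
    calc Real.sqrt ((x1 ^ 2 - x2 ^ 2) * (y1 ^ 2 - y2 ^ 2))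
        ≤ Real.sqrt ((x1 * y1 - x2 * y2) ^ 2) := Real.sqrt_le_sqrt (by nlinarith [sq_nonneg (x1 * y2 - x2 * y1)])
      _ = x1 * y1 - x2 * y2 := Real.sqrt_sq (by nlinarith)
  have hs : Real.sqrt (x1 ^ 2 - x2 ^ 2) * Real.sqrt (y1 ^ 2 - y2 ^ 2)
      = Real.sqrt ((x1 ^ 2 - x2 ^ 2) * (y1 ^ 2 - y2 ^ 2)) := (Real.sqrt_mul hX _).symm
  have h2 : Real.sqrt (x1 ^ 2 - x2 ^ 2) * Real.sqrt (y1 ^ 2 - y2 ^ 2) ≤ x1 * y1 - x2 * y2 :=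
    hs ▸ h1
  have hL : 0 ≤ a * Real.sqrt (x1 ^ 2 - x2 ^ 2) + b * Real.sqrt (y1 ^ 2 - y2 ^ 2) := by
    positivity
  rw [show (a * x1 + b * y1) ^ 2 - (a * x2 + b * y2) ^ 2
      = a ^ 2 * (x1 ^ 2 - x2 ^ 2) + b ^ 2 * (y1 ^ 2 - y2 ^ 2)
        + 2 * (a * b) * (x1 * y1 - x2 * y2) by ring]
  rw [← Real.sqrt_sq hL]
  apply Real.sqrt_le_sqrt
  nlinarith [Real.sq_sqrt hX, Real.sq_sqrt hY, mul_nonneg ha hb, h2,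
    Real.sqrt_nonneg (x1 ^ 2 - x2 ^ 2), Real.sqrt_nonneg (y1 ^ 2 - y2 ^ 2)]

/-- f(a,t) = √(a² − t²) is concave on {(a,t) : a ≥ t ≥ 0}. -/
theorem concaveOn_sqrt_sq_sub_sq :
    ConcaveOn ℝ {p : ℝ × ℝ | p.2 ≥ 0 ∧ p.1 ≥ p.2}
      (fun p : ℝ × ℝ => Real.sqrt (p.1 ^ 2 - p.2 ^ 2)) := by
  constructor
  · intro p hp q hq a b ha hb hab
    obtain ⟨hp1, hp2⟩ := hp
    obtain ⟨hq1, hq2⟩ := hq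
    constructor
    · simp only [Prod.snd_add, Prod.smul_snd, smul_eq_mul]
      nlinarith
    · simp only [Prod.fst_add, Prod.snd_add, Prod.smul_fst, Prod.smul_snd, smul_eq_mul]
      nlinarith
  · intro p hp q hq a b ha hb hab
    obtain ⟨hp1, hp2⟩ := hp
    obtain ⟨hq1, hq2⟩ := hq
    simp only [Prod.fst_add, Prod.snd_add, Prod.smul_fst, Prod.smul_snd, smul_eq_mul]
    exact sqrt_key a b p.1 p.2 q.1 q.2 hp1 hp2 hq1 hq2 ha hb
end

section
/- If a function τ_a : States → ℝ is concave (superadditive over convex mixtures), τ₃ : States → ℝ is convex, and τ_a(ρ) ≥ τ₃(ρ) ≥ 0 for all ρ, then τ₄(ρ) := √(τ_a(ρ)² − τ₃(ρ)²) is concave: for λ ∈ [0,1], λτ₄(ρ₁) + (1−λ)τ₄(ρ₂) ≤ τ₄(λρ₁ + (1−λ)ρ₂). -/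
lemma sqrt_sub_sq_superadd (x₁ y₁ x₂ y₂ : ℝ) (h1 : 0 ≤ y₁) (h2 : y₁ ≤ x₁)
    (h3 : 0 ≤ y₂) (h4 : y₂ ≤ x₂) :
    Real.sqrt (x₁ ^ 2 - y₁ ^ 2) + Real.sqrt (x₂ ^ 2 - y₂ ^ 2)
      ≤ Real.sqrt ((x₁ + x₂) ^ 2 - (y₁ + y₂) ^ 2) := by
  have hu : (0:ℝ) ≤ x₁ ^ 2 - y₁ ^ 2 := by nlinarith
  have hv : (0:ℝ) ≤ x₂ ^ 2 - y₂ ^ 2 := by nlinarith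
  set s₁ := Real.sqrt (x₁ ^ 2 - y₁ ^ 2) with hs₁
  set s₂ := Real.sqrt (x₂ ^ 2 - y₂ ^ 2) with hs₂
  have hs₁n : 0 ≤ s₁ := Real.sqrt_nonneg _
  have hs₂n : 0 ≤ s₂ := Real.sqrt_nonneg _
  have hs₁sq : s₁ ^ 2 = x₁ ^ 2 - y₁ ^ 2 := Real.sq_sqrt hu
  have hs₂sq : s₂ ^ 2 = x₂ ^ 2 - y₂ ^ 2 := Real.sq_sqrt hv
  have hmul : s₁ * s₂ ≤ x₁ * x₂ - y₁ * y₂ := by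
    have e : s₁ * s₂ = Real.sqrt ((x₁ ^ 2 - y₁ ^ 2) * (x₂ ^ 2 - y₂ ^ 2)) :=
      (Real.sqrt_mul hu _).symm
    rw [e]
    have hle : (x₁ ^ 2 - y₁ ^ 2) * (x₂ ^ 2 - y₂ ^ 2) ≤ (x₁ * x₂ - y₁ * y₂) ^ 2 := by
      nlinarith [sq_nonneg (x₁ * y₂ - x₂ * y₁)]
    calc Real.sqrt ((x₁ ^ 2 - y₁ ^ 2) * (x₂ ^ 2 - y₂ ^ 2))
        ≤ Real.sqrt ((x₁ * x₂ - y₁ * y₂) ^ 2) := Real.sqrt_le_sqrt hle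
      _ = x₁ * x₂ - y₁ * y₂ := Real.sqrt_sq (by nlinarith)
  apply Real.le_sqrt_of_sq_le
  nlinarith

/-- If τ_a is concave, τ₃ is convex and τ_a ≥ τ₃ ≥ 0 pointwise, then
τ₄ := √(τ_a² − τ₃²) is concave over convex mixtures of states. -/
theorem tau4_concave {V : Type*} [AddCommGroup V] [Module ℝ V]
    (τa τ₃ : V → ℝ)
    (hconc : ∀ (ρ₁ ρ₂ : V) (lam : ℝ), 0 ≤ lam → lam ≤ 1 →
      lam * τa ρ₁ + (1 - lam) * τa ρ₂ ≤ τa (lam • ρ₁ + (1 - lam) • ρ₂))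
    (hconv : ∀ (ρ₁ ρ₂ : V) (lam : ℝ), 0 ≤ lam → lam ≤ 1 →
      τ₃ (lam • ρ₁ + (1 - lam) • ρ₂) ≤ lam * τ₃ ρ₁ + (1 - lam) * τ₃ ρ₂)
    (hge : ∀ ρ : V, τ₃ ρ ≤ τa ρ) (hpos : ∀ ρ : V, 0 ≤ τ₃ ρ) :
    ∀ (ρ₁ ρ₂ : V) (lam : ℝ), 0 ≤ lam → lam ≤ 1 →
      lam * Real.sqrt (τa ρ₁ ^ 2 - τ₃ ρ₁ ^ 2)
        + (1 - lam) * Real.sqrt (τa ρ₂ ^ 2 - τ₃ ρ₂ ^ 2)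
      ≤ Real.sqrt (τa (lam • ρ₁ + (1 - lam) • ρ₂) ^ 2
        - τ₃ (lam • ρ₁ + (1 - lam) • ρ₂) ^ 2) := by
  intro ρ₁ ρ₂ lam hl0 hl1
  set ρ := lam • ρ₁ + (1 - lam) • ρ₂ with hρ
  have hl1' : (0:ℝ) ≤ 1 - lam := by linarith
  -- rewrite λ√(a²−b²) = √((λa)²−(λb)²)
  have e1 : lam * Real.sqrt (τa ρ₁ ^ 2 - τ₃ ρ₁ ^ 2)
      = Real.sqrt ((lam * τa ρ₁) ^ 2 - (lam * τ₃ ρ₁) ^ 2) := by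
    rw [mul_pow, mul_pow, ← mul_sub, Real.sqrt_mul (by positivity), Real.sqrt_sq hl0]
  have e2 : (1 - lam) * Real.sqrt (τa ρ₂ ^ 2 - τ₃ ρ₂ ^ 2)
      = Real.sqrt (((1 - lam) * τa ρ₂) ^ 2 - ((1 - lam) * τ₃ ρ₂) ^ 2) := by
    rw [mul_pow, mul_pow, ← mul_sub, Real.sqrt_mul (by positivity), Real.sqrt_sq hl1']
  rw [e1, e2]
  have key := sqrt_sub_sq_superadd (lam * τa ρ₁) (lam * τ₃ ρ₁)
    ((1 - lam) * τa ρ₂) ((1 - lam) * τ₃ ρ₂)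
    (mul_nonneg hl0 (hpos ρ₁)) (mul_le_mul_of_nonneg_left (hge ρ₁) hl0)
    (mul_nonneg hl1' (hpos ρ₂)) (mul_le_mul_of_nonneg_left (hge ρ₂) hl1')
  refine key.trans (Real.sqrt_le_sqrt ?_)
  have hA := hconc ρ₁ ρ₂ lam hl0 hl1
  have hB := hconv ρ₁ ρ₂ lam hl0 hl1
  have hBn : 0 ≤ τ₃ ρ := hpos ρ
  have hSn : 0 ≤ lam * τa ρ₁ + (1 - lam) * τa ρ₂ := by
    have := hpos ρ₁; have := hpos ρ₂; have := hge ρ₁; have := hge ρ₂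
    nlinarith
  nlinarith [sq_nonneg (τ₃ ρ + (lam * τ₃ ρ₁ + (1 - lam) * τ₃ ρ₂))]
end

section
/- The quantity D(a) = d₁ − 2d₂ + 4d₃ (Cayley's 2×2×2 hyperdeterminant of the amplitude tensor a_{ijk}) satisfies D(A·a) = det(A)² · D(a), where A·a denotes the action of a 2×2 matrix A on the first index: (A·a)_{ijk} = ∑_{i'} A_{ii'} a_{i'jk}. -/
/-- d₁ of the CKW 3-tangle. -/
def d₁ (a : Fin 2 → Fin 2 → Fin 2 → ℂ) : ℂ :=
  (a 0 0 0) ^ 2 * (a 1 1 1) ^ 2 + (a 0 0 1) ^ 2 * (a 1 1 0) ^ 2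
    + (a 0 1 0) ^ 2 * (a 1 0 1) ^ 2 + (a 1 0 0) ^ 2 * (a 0 1 1) ^ 2

/-- d₂ of the CKW 3-tangle. -/
def d₂ (a : Fin 2 → Fin 2 → Fin 2 → ℂ) : ℂ :=
  a 0 0 0 * a 1 1 1 * a 0 1 1 * a 1 0 0 + a 0 0 0 * a 1 1 1 * a 1 0 1 * a 0 1 0
    + a 0 0 0 * a 1 1 1 * a 1 1 0 * a 0 0 1 + a 0 1 1 * a 1 0 0 * a 1 0 1 * a 0 1 0
    + a 0 1 1 * a 1 0 0 * a 1 1 0 * a 0 0 1 + a 1 0 1 * a 0 1 0 * a 1 1 0 * a 0 0 1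

/-- d₃ of the CKW 3-tangle. -/
def d₃ (a : Fin 2 → Fin 2 → Fin 2 → ℂ) : ℂ :=
  a 0 0 0 * a 1 1 0 * a 1 0 1 * a 0 1 1 + a 1 1 1 * a 0 0 1 * a 0 1 0 * a 1 0 0


/-- Cayley's 2×2×2 hyperdeterminant D = d₁ − 2d₂ + 4d₃. -/
def hyperdet (a : Fin 2 → Fin 2 → Fin 2 → ℂ) : ℂ := d₁ a - 2 * d₂ a + 4 * d₃ a

/-- Action of a 2×2 matrix on the first index of a 2×2×2 tensor. -/
noncomputable def actFst (A : Matrix (Fin 2) (Fin 2) ℂ) (a : Fin 2 → Fin 2 → Fin 2 → ℂ) :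
    Fin 2 → Fin 2 → Fin 2 → ℂ :=
  fun i j k => ∑ i', A i i' * a i' j k

/-- Covariance of the hyperdeterminant: D(A·a) = det(A)² · D(a). -/
theorem hyperdet_actFst (A : Matrix (Fin 2) (Fin 2) ℂ) (a : Fin 2 → Fin 2 → Fin 2 → ℂ) :
    hyperdet (actFst A a) = A.det ^ 2 * hyperdet a := by
  simp only [hyperdet, d₁, d₂, d₃, actFst, Fin.sum_univ_two, Matrix.det_fin_two]
  ring
end

section
/- Assume: (1) τ_a and τ₃ are the concave-roof and convex-roof extensions of the pure-state 3-tangle, and (2) for every three-qubit pure state |ψ_{BCD}⟩, τ₃(|ψ_{BCD}⟩) = √(C_a²(ρ_CD) − C²(ρ_CD)) where ρ_CD = Tr_B|ψ⟩⟨ψ|, C_a is concave and C is convex over mixtures. Then for any four-qubit pure state |φ⟩_{ABCD}: τ_{(A)BCD}² + τ₃²(ρ_{BCD}) ≤ τ₃²(|φ⟩_{[AB]CD}), where τ_{(A)BCD} = √(τ_a²(ρ_{BCD}) − τ₃²(ρ_{BCD})), ρ_{BCD} = Tr_A|φ⟩⟨φ|, and τ₃(|φ⟩_{[AB]CD}) =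 √(C_a²(ρ_CD) − C²(ρ_CD)) with AB treated as one party. -/
open scoped ComplexOrder

/-- Reduced density matrix on BCD of a four-qubit pure state (trace out A). -/
noncomputable def trA (φ : Fin 2 × Fin 2 × Fin 2 × Fin 2 → ℂ) :
    Matrix (Fin 2 × Fin 2 × Fin 2) (Fin 2 × Fin 2 × Fin 2) ℂ :=
  fun x y => ∑ a, φ (a, x) * star (φ (a, y))

/-- Reduced density matrix on CD of a four-qubit pure state (trace out A and B). -/
noncomputable def trAB (φ : Fin 2 × Fin 2 × Fin 2 × Fin 2 → ℂ) :
    Matrix (Fin 2 × Fin 2) (Fin 2 × Fin 2) ℂ :=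
  fun x y => ∑ a, ∑ b, φ (a, b, x) * star (φ (a, b, y))

/-- Reduced density matrix on CD of a three-qubit pure state (trace out B). -/
noncomputable def trB3 (ψ : Fin 2 × Fin 2 × Fin 2 → ℂ) :
    Matrix (Fin 2 × Fin 2) (Fin 2 × Fin 2) ℂ :=
  fun x y => ∑ b, ψ (b, x) * star (ψ (b, y))

/-- Pure-state 3-tangle via concurrence and concurrence of assistance:
τ₃(|ψ_{BCD}⟩) = √(C_a²(ρ_CD) − C²(ρ_CD)). -/
noncomputable def τ₃pure (C Ca : Matrix (Fin 2 × Fin 2) (Fin 2 × Fin 2) ℂ → ℝ)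
    (ψ : Fin 2 × Fin 2 × Fin 2 → ℂ) : ℝ :=
  Real.sqrt (Ca (trB3 ψ) ^ 2 - C (trB3 ψ) ^ 2)

/-- Values ∑ pᵢ E(πᵢ) over pure-state decompositions of a three-qubit mixed state. -/
def decompVals (ρ : Matrix (Fin 2 × Fin 2 × Fin 2) (Fin 2 × Fin 2 × Fin 2) ℂ)
    (E : (Fin 2 × Fin 2 × Fin 2 → ℂ) → ℝ) : Set ℝ :=
  {v | ∃ (k : ℕ) (p : Fin k → ℝ) (π : Fin k → Fin 2 × Fin 2 × Fin 2 → ℂ),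
    (∀ i, 0 < p i) ∧ ∑ i, p i = 1 ∧
    (∀ i, ∑ x, Complex.normSq (π i x) = 1) ∧
    ρ = ∑ i, (p i : ℂ) • Matrix.vecMulVec (π i) (star ∘ π i) ∧
    v = ∑ i, p i * E (π i)}

/-- Convex-roof 3-tangle of a three-qubit mixed state. -/
noncomputable def τ₃mix (C Ca : Matrix (Fin 2 × Fin 2) (Fin 2 × Fin 2) ℂ → ℝ)
    (ρ : Matrix (Fin 2 × Fin 2 × Fin 2) (Fin 2 × Fin 2 × Fin 2) ℂ) : ℝ :=
  sInf (decompVals ρ (τ₃pure C Ca))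

/-- Concave-roof 3-tangle of assistance of a three-qubit mixed state. -/
noncomputable def τₐ (C Ca : Matrix (Fin 2 × Fin 2) (Fin 2 × Fin 2) ℂ → ℝ)
    (ρ : Matrix (Fin 2 × Fin 2 × Fin 2) (Fin 2 × Fin 2 × Fin 2) ℂ) : ℝ :=
  sSup (decompVals ρ (τ₃pure C Ca))

open Matrix in
lemma trB3_psd (ψ : Fin 2 × Fin 2 × Fin 2 → ℂ) : (trB3 ψ).PosSemidef := by
  have : trB3 ψ = (Matrix.of fun (b : Fin 2) (x : Fin 2 × Fin 2) => star (ψ (b, x)))ᴴ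
      * (Matrix.of fun (b : Fin 2) (x : Fin 2 × Fin 2) => star (ψ (b, x))) := by
    ext x y
    simp [trB3, Matrix.mul_apply]
  rw [this]
  exact Matrix.posSemidef_conjTranspose_mul_self _

open Matrix in
lemma trAB_psd (φ : Fin 2 × Fin 2 × Fin 2 × Fin 2 → ℂ) : (trAB φ).PosSemidef := by
  have : trAB φ = (Matrix.of fun (c : Fin 2 × Fin 2) (x : Fin 2 × Fin 2) =>
        star (φ (c.1, c.2, x)))ᴴ
      * (Matrix.of fun (c : Fin 2 × Fin 2) (x : Fin 2 × Fin 2) => star (φ (c.1, c.2, x))) := by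
    ext x y
    simp [trAB, Matrix.mul_apply, Fintype.sum_prod_type]
  rw [this]
  exact Matrix.posSemidef_conjTranspose_mul_self _

lemma cs_step {k : ℕ} (p x y : Fin k → ℝ) (hp : ∀ i, 0 ≤ p i)
    (hy : ∀ i, 0 ≤ y i) (hxy : ∀ i, y i ≤ x i) :
    (∑ i, p i * Real.sqrt (x i ^ 2 - y i ^ 2)) ^ 2
      ≤ (∑ i, p i * x i) ^ 2 - (∑ i, p i * y i) ^ 2 := by
  have h := Finset.sum_sq_le_sum_mul_sum_of_sq_eq_mul Finset.univ
    (r := fun i => p i * Real.sqrt (x i ^ 2 - y i ^ 2))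
    (f := fun i => p i * (x i - y i)) (g := fun i => p i * (x i + y i))
    (fun i _ => mul_nonneg (hp i) (by linarith [hxy i]))
    (fun i _ => mul_nonneg (hp i) (by linarith [hy i, hxy i]))
    (fun i _ => by
      have h1 : (0:ℝ) ≤ x i ^ 2 - y i ^ 2 := by nlinarith [hxy i, hy i]
      rw [mul_pow, Real.sq_sqrt h1]; ring)
  calc (∑ i, p i * Real.sqrt (x i ^ 2 - y i ^ 2)) ^ 2
      ≤ (∑ i, p i * (x i - y i)) * ∑ i, p i * (x i + y i) := h
    _ = (∑ i, p i * x i) ^ 2 - (∑ i, p i * y i) ^ 2 := by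
        simp only [mul_sub, mul_add, Finset.sum_sub_distrib, Finset.sum_add_distrib]
        ring

/-- Monogamy relation: τ_{(A)BCD}² + τ₃²(ρ_{BCD}) ≤ τ₃²(|φ⟩_{[AB]CD}). -/
theorem monogamy_tau4
    (C Ca : Matrix (Fin 2 × Fin 2) (Fin 2 × Fin 2) ℂ → ℝ)
    (hCconv : ∀ (k : ℕ) (p : Fin k → ℝ) (σ : Fin k → Matrix (Fin 2 × Fin 2) (Fin 2 × Fin 2) ℂ),
      (∀ i, 0 ≤ p i) → ∑ i, p i = 1 →
      C (∑ i, (p i : ℂ) • σ i) ≤ ∑ i, p i * C (σ i))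
    (hCaconc : ∀ (k : ℕ) (p : Fin k → ℝ) (σ : Fin k → Matrix (Fin 2 × Fin 2) (Fin 2 × Fin 2) ℂ),
      (∀ i, 0 ≤ p i) → ∑ i, p i = 1 →
      ∑ i, p i * Ca (σ i) ≤ Ca (∑ i, (p i : ℂ) • σ i))
    (hC0 : ∀ ρ : Matrix (Fin 2 × Fin 2) (Fin 2 × Fin 2) ℂ, ρ.PosSemidef → 0 ≤ C ρ)
    (hCCa : ∀ ρ : Matrix (Fin 2 × Fin 2) (Fin 2 × Fin 2) ℂ, ρ.PosSemidef → C ρ ≤ Ca ρ)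
    (φ : Fin 2 × Fin 2 × Fin 2 × Fin 2 → ℂ)
    (hφ : ∑ x, Complex.normSq (φ x) = 1)
    (hattain : τₐ C Ca (trA φ) ∈ decompVals (trA φ) (τ₃pure C Ca)) :
    Real.sqrt (τₐ C Ca (trA φ) ^ 2 - τ₃mix C Ca (trA φ) ^ 2) ^ 2
        + τ₃mix C Ca (trA φ) ^ 2
      ≤ Ca (trAB φ) ^ 2 - C (trAB φ) ^ 2 := by
  obtain ⟨k, p, π, hp, hsum, hnorm, hρ, hv⟩ := id hattain
  set σ : Fin k → Matrix (Fin 2 × Fin 2) (Fin 2 × Fin 2) ℂ := fun i => trB3 (π i) with hσ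
  have hσpsd : ∀ i, (σ i).PosSemidef := fun i => trB3_psd _
  have hdecomp : trAB φ = ∑ i, (p i : ℂ) • σ i := by
    ext x y
    have h1 : trAB φ x y = ∑ b, trA φ (b, x) (b, y) := by
      simp only [trAB, trA]
      exact Finset.sum_comm
    rw [h1, hρ]
    simp only [Matrix.sum_apply, Matrix.smul_apply, Matrix.vecMulVec_apply,
      Function.comp_apply, smul_eq_mul]
    rw [Finset.sum_comm]
    refine Finset.sum_congr rfl fun i _ => ?_
    simp [hσ, trB3, Finset.mul_sum, mul_add]
  have hCle : C (trAB φ) ≤ ∑ i, p i * C (σ i) := by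
    rw [hdecomp]; exact hCconv k p σ (fun i => (hp i).le) hsum
  have hCage : ∑ i, p i * Ca (σ i) ≤ Ca (trAB φ) := by
    rw [hdecomp]; exact hCaconc k p σ (fun i => (hp i).le) hsum
  have hXY : ∀ i, C (σ i) ≤ Ca (σ i) := fun i => hCCa _ (hσpsd i)
  have hY0 : ∀ i, 0 ≤ C (σ i) := fun i => hC0 _ (hσpsd i)
  have hcs := cs_step p (fun i => Ca (σ i)) (fun i => C (σ i)) (fun i => (hp i).le) hY0 hXY
  have hτa : τₐ C Ca (trA φ) = ∑ i, p i * Real.sqrt (Ca (σ i) ^ 2 - C (σ i) ^ 2) := by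
    simpa [τ₃pure, hσ] using hv
  have hτa2 : τₐ C Ca (trA φ) ^ 2 ≤ Ca (trAB φ) ^ 2 - C (trAB φ) ^ 2 := by
    rw [hτa]
    refine hcs.trans ?_
    have hX0 : 0 ≤ ∑ i, p i * Ca (σ i) :=
      Finset.sum_nonneg fun i _ => mul_nonneg (hp i).le ((hY0 i).trans (hXY i))
    have h1 : (∑ i, p i * Ca (σ i)) ^ 2 ≤ Ca (trAB φ) ^ 2 := pow_le_pow_left₀ hX0 hCage 2
    have h2 : C (trAB φ) ^ 2 ≤ (∑ i, p i * C (σ i)) ^ 2 :=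
      pow_le_pow_left₀ (hC0 _ (trAB_psd φ)) hCle 2
    linarith
  have hlb : ∀ v ∈ decompVals (trA φ) (τ₃pure C Ca), 0 ≤ v := by
    rintro v ⟨k', p', π', hp', -, -, -, rfl⟩
    exact Finset.sum_nonneg fun i _ => mul_nonneg (hp' i).le (Real.sqrt_nonneg _)
  have hm_le : τ₃mix C Ca (trA φ) ≤ τₐ C Ca (trA φ) := csInf_le ⟨0, hlb⟩ hattain
  have hm0 : 0 ≤ τ₃mix C Ca (trA φ) := le_csInf ⟨_, hattain⟩ hlb
  have hm2 : τ₃mix C Ca (trA φ) ^ 2 ≤ τₐ C Ca (trA φ) ^ 2 := pow_le_pow_left₀ hm0 hm_le 2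
  rw [Real.sq_sqrt (by linarith)]
  linarith
end

section
/- The Cayley hyperdeterminant polynomial D(a) = d₁ − 2d₂ + 4d₃ of a 2×2×2 tensor is invariant (up to sign of determinant squared being 1) under SL(2,ℂ) acting on any single index: if det A = 1 then D(A·a) = D(a). -/
/-- Action on the second index. -/
noncomputable def actSnd (A : Matrix (Fin 2) (Fin 2) ℂ) (a : Fin 2 → Fin 2 → Fin 2 → ℂ) :
    Fin 2 → Fin 2 → Fin 2 → ℂ := fun i j k => ∑ j', A j j' * a i j' k

/-- Action on the third index. -/
noncomputable def actTrd (A : Matrix (Fin 2) (Fin 2) ℂ) (a : Fin 2 → Fin 2 → Fin 2 → ℂ) :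
    Fin 2 → Fin 2 → Fin 2 → ℂ := fun i j k => ∑ k', A k k' * a i j k'

/-- The hyperdeterminant is invariant under SL(2,ℂ) acting on any single index. -/
theorem hyperdet_SL2_invariant (A : Matrix (Fin 2) (Fin 2) ℂ) (hA : A.det = 1)
    (a : Fin 2 → Fin 2 → Fin 2 → ℂ) :
    hyperdet (actFst A a) = hyperdet a ∧
    hyperdet (actSnd A a) = hyperdet a ∧
    hyperdet (actTrd A a) = hyperdet a := by
  rw [Matrix.det_fin_two] at hA
  refine ⟨?_, ?_, ?_⟩ <;>
  · simp only [hyperdet, d₁, d₂, d₃, actFst, actSnd, actTrd, Fin.sum_univ_two]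
    linear_combination (A 0 0 * A 1 1 - A 0 1 * A 1 0 + 1) *
      ((a 0 0 0) ^ 2 * (a 1 1 1) ^ 2 + (a 0 0 1) ^ 2 * (a 1 1 0) ^ 2
        + (a 0 1 0) ^ 2 * (a 1 0 1) ^ 2 + (a 1 0 0) ^ 2 * (a 0 1 1) ^ 2
      - 2 * (a 0 0 0 * a 1 1 1 * a 0 1 1 * a 1 0 0 + a 0 0 0 * a 1 1 1 * a 1 0 1 * a 0 1 0
        + a 0 0 0 * a 1 1 1 * a 1 1 0 * a 0 0 1 + a 0 1 1 * a 1 0 0 * a 1 0 1 * a 0 1 0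
        + a 0 1 1 * a 1 0 0 * a 1 1 0 * a 0 0 1 + a 1 0 1 * a 0 1 0 * a 1 1 0 * a 0 0 1)
      + 4 * (a 0 0 0 * a 1 1 0 * a 1 0 1 * a 0 1 1 + a 1 1 1 * a 0 0 1 * a 0 1 0 * a 1 0 0)) * hA
end
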